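/- arXiv:1609.07324 — 3 statements merged into one kernel-verified Lean document; each statement's English description precedes it below -/
import Mathlib

section
/- Let (x,v) be a solution of the perturbed Cucker-Smale system ẋ_i = v_i, v̇_i = (1/N) Σ_{j=1}^N a(‖x_i − x_j‖)(v_j − v_i) + α(t)(v̄(t) − v_i(t)) + β(t) Δ_i(t), where a is nonincreasing. Then with X(t) = B(x(t),x(t)), V(t) = B(v(t),v(t)) and v_i^⊥(t) = v_i(t) − v̄(t), for every t ≥ 0 one has d/dt V(t) ≤ −2 a(√(2N X(t))) V(t) − 2 α(t) V(t) + (2 β(t)/N) Σ_{i=1}^N Δ_i(t)·v_i^⊥(t). -/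
open scoped BigOperators InnerProductSpace
open MeasureTheory Filter

/-- The symmetric bilinear form `B(v,w) = (1/(2N²)) ∑ᵢ∑ⱼ (vᵢ-vⱼ)·(wᵢ-wⱼ)`. -/
noncomputable def bform {d N : ℕ} (v w : Fin N → EuclideanSpace ℝ (Fin d)) : ℝ :=
  (2 * (N : ℝ) ^ 2)⁻¹ * ∑ i, ∑ j, ⟪v i - v j, w i - w j⟫_ℝ

/-- The mean of `N` vectors. -/
noncomputable def meanVec {d N : ℕ} (v : Fin N → EuclideanSpace ℝ (Fin d)) :
    EuclideanSpace ℝ (Fin d) :=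
  (N : ℝ)⁻¹ • ∑ i, v i

section helpers
variable {E : Type*} [NormedAddCommGroup E] [InnerProductSpace ℝ E] {N : ℕ}

lemma sum_inner_antisym (u F : Fin N → E) :
    ∑ i, ∑ j, ⟪u i - u j, F i - F j⟫_ℝ = 2 * ∑ i, ∑ j, ⟪u i - u j, F i⟫_ℝ := by
  have hswap : ∑ i, ∑ j, ⟪u i - u j, F j⟫_ℝ = - ∑ i, ∑ j, ⟪u i - u j, F i⟫_ℝ := by
    rw [Finset.sum_comm]
    rw [← Finset.sum_neg_distrib]
    refine Finset.sum_congr rfl fun j _ => ?_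
    rw [← Finset.sum_neg_distrib]
    refine Finset.sum_congr rfl fun i _ => ?_
    rw [← inner_neg_left, neg_sub]
  simp only [inner_sub_right, Finset.sum_sub_distrib]
  rw [hswap]; ring

end helpers

variable {d N : ℕ}

lemma sum_sub_mean (hN : 0 < N) (u : Fin N → EuclideanSpace ℝ (Fin d)) :
    ∑ j, (u j - meanVec u) = 0 := by
  have hNne : (N : ℝ) ≠ 0 := Nat.cast_ne_zero.mpr hN.ne'
  simp only [Finset.sum_sub_distrib, Finset.sum_const, Finset.card_univ, Fintype.card_fin,
    ← Nat.cast_smul_eq_nsmul ℝ, meanVec, smul_smul, mul_inv_cancel₀ hNne, one_smul, sub_self]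

lemma sum_sub_eq_nsmul (hN : 0 < N) (u : Fin N → EuclideanSpace ℝ (Fin d)) (i : Fin N) :
    ∑ j, (u i - u j) = (N : ℝ) • (u i - meanVec u) := by
  have h : ∀ j, u i - u j = (u i - meanVec u) - (u j - meanVec u) := fun j => by abel
  simp_rw [h]
  rw [Finset.sum_sub_distrib, sum_sub_mean hN, sub_zero, Finset.sum_const,
    Finset.card_univ, Fintype.card_fin, ← Nat.cast_smul_eq_nsmul ℝ]

lemma inner_sum_sub (hN : 0 < N) (u : Fin N → EuclideanSpace ℝ (Fin d)) (i : Fin N)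
    (c : EuclideanSpace ℝ (Fin d)) :
    ∑ j, ⟪u i - u j, c⟫_ℝ = (N : ℝ) * ⟪u i - meanVec u, c⟫_ℝ := by
  rw [← sum_inner, sum_sub_eq_nsmul hN, real_inner_smul_left]

lemma main_ineq (hN : 0 < N) (astar αt βt : ℝ) (hαt : 0 ≤ αt)
    (A : Fin N → Fin N → ℝ) (hA : ∀ i j, A i j = A j i) (hAlb : ∀ i j, astar ≤ A i j)
    (u D W : Fin N → EuclideanSpace ℝ (Fin d))
    (hW : ∀ i, W i = (N : ℝ)⁻¹ • ∑ j, A i j • (u j - u i) + αt • (meanVec u - u i) + βt • D i) :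
    (2 * (N : ℝ) ^ 2)⁻¹ * ∑ i, ∑ j, (⟪u i - u j, W i - W j⟫_ℝ + ⟪W i - W j, u i - u j⟫_ℝ)
      ≤ -2 * astar * bform u u - 2 * αt * bform u u
        + (2 * βt / N) * ∑ i, ⟪D i, u i - meanVec u⟫_ℝ := by
  have hNne : (N : ℝ) ≠ 0 := Nat.cast_ne_zero.mpr hN.ne'
  set m := meanVec u with hm
  set Q : ℝ := ∑ i, ∑ j, ⟪u i - u j, u i - u j⟫_ℝ with hQ
  set P : ℝ := ∑ i, ⟪u i - m, D i⟫_ℝ with hP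
  set G : Fin N → EuclideanSpace ℝ (Fin d) := fun i => (N : ℝ)⁻¹ • ∑ k, A i k • (u k - u i)
    with hG
  -- LHS rewrite
  have hLHS : ∑ i, ∑ j, (⟪u i - u j, W i - W j⟫_ℝ + ⟪W i - W j, u i - u j⟫_ℝ)
      = 2 * ∑ i, ∑ j, ⟪u i - u j, W i - W j⟫_ℝ := by
    rw [Finset.mul_sum]
    refine Finset.sum_congr rfl fun i _ => ?_
    rw [Finset.mul_sum]
    refine Finset.sum_congr rfl fun j _ => ?_
    rw [real_inner_comm (W i - W j)]; ring
  -- decomposition of each summand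
  have hdec : ∀ i j : Fin N, ⟪u i - u j, W i - W j⟫_ℝ
      = ⟪u i - u j, G i - G j⟫_ℝ + (- αt * ⟪u i - u j, u i - u j⟫_ℝ)
        + ⟪u i - u j, βt • D i - βt • D j⟫_ℝ := by
    intro i j
    have h1 : W i - W j = (G i - G j) + (-αt) • (u i - u j) + (βt • D i - βt • D j) := by
      rw [hW i, hW j, hG]
      simp only [smul_sub, neg_smul]
      module
    rw [h1, inner_add_right, inner_add_right, real_inner_smul_right]
  -- term S3
  have hS3 : ∑ i, ∑ j, ⟪u i - u j, βt • D i - βt • D j⟫_ℝ = 2 * βt * (N : ℝ) * P := by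
    rw [sum_inner_antisym u (fun i => βt • D i)]
    have hrow : ∀ i : Fin N, ∑ j, ⟪u i - u j, βt • D i⟫_ℝ
        = βt * (N : ℝ) * ⟪u i - m, D i⟫_ℝ := by
      intro i
      simp_rw [real_inner_smul_right]
      rw [← Finset.mul_sum, inner_sum_sub hN, ← hm]
      ring
    simp_rw [hrow]
    rw [← Finset.mul_sum, hP]
    ring
  -- term S1
  have hS1 : ∑ i, ∑ j, ⟪u i - u j, G i - G j⟫_ℝ
      = - ∑ i, ∑ k, A i k * ⟪u i - u k, u i - u k⟫_ℝ := by
    rw [sum_inner_antisym u G]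
    have hGin : ∀ i j : Fin N, ⟪u i - u j, G i⟫_ℝ
        = (N : ℝ)⁻¹ * ∑ k, A i k * ⟪u i - u j, u k - u i⟫_ℝ := by
      intro i j
      rw [hG, real_inner_smul_right, inner_sum]
      simp_rw [real_inner_smul_right]
    simp_rw [hGin, ← Finset.mul_sum]
    -- S' := ∑ i ∑ j ∑ k A i k * ⟪u i - u j, u k - u i⟫
    set f : Fin N → Fin N → Fin N → ℝ := fun i j k => A i k * ⟪u i - u j, u k - u i⟫_ℝ with hf
    have hswap : ∑ i, ∑ j, ∑ k, f i j k = ∑ i, ∑ j, ∑ k, f k j i := by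
      calc ∑ i, ∑ j, ∑ k, f i j k
          = ∑ i, ∑ k, ∑ j, f i j k := Finset.sum_congr rfl fun i _ => Finset.sum_comm
        _ = ∑ k, ∑ i, ∑ j, f i j k := Finset.sum_comm
        _ = ∑ i, ∑ j, ∑ k, f k j i := Finset.sum_congr rfl fun k _ => Finset.sum_comm
    have hdouble : 2 * ∑ i, ∑ j, ∑ k, f i j k
        = ∑ i, ∑ j, ∑ k, (f i j k + f k j i) := by
      simp only [Finset.sum_add_distrib]
      rw [← hswap]; ring
    have hpt : ∀ i j k : Fin N, f i j k + f k j i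
        = -(A i k * ⟪u i - u k, u i - u k⟫_ℝ) := by
      intro i j k
      rw [hf]
      simp only
      rw [hA k i]
      have e1 : u k - u j = (u i - u j) - (u i - u k) := by abel
      have e2 : u k - u i = -(u i - u k) := by abel
      rw [e2, e1, inner_neg_right]
      simp only [inner_sub_left]
      ring
    have hsum : ∑ i, ∑ j, ∑ k, (f i j k + f k j i)
        = -(N : ℝ) * ∑ i, ∑ k, A i k * ⟪u i - u k, u i - u k⟫_ℝ := by
      simp_rw [hpt]
      rw [Finset.mul_sum]
      refine Finset.sum_congr rfl fun i _ => ?_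
      rw [Finset.sum_comm, Finset.mul_sum]
      refine Finset.sum_congr rfl fun k _ => ?_
      rw [Finset.sum_const, Finset.card_univ, Fintype.card_fin, nsmul_eq_mul]
      ring
    have : ∑ i, ∑ j, ∑ k, f i j k
        = -(N : ℝ) / 2 * ∑ i, ∑ k, A i k * ⟪u i - u k, u i - u k⟫_ℝ := by
      have := hdouble.trans hsum
      linarith
    rw [this]
    field_simp
  -- bound on S1
  have hS1le : - ∑ i, ∑ k, A i k * ⟪u i - u k, u i - u k⟫_ℝ ≤ -astar * Q := by
    rw [hQ, neg_le, Finset.mul_sum, ← Finset.sum_neg_distrib]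
    refine Finset.sum_le_sum fun i _ => ?_
    rw [Finset.mul_sum, ← Finset.sum_neg_distrib]
    refine Finset.sum_le_sum fun k _ => ?_
    have h0 : (0:ℝ) ≤ ⟪u i - u k, u i - u k⟫_ℝ := real_inner_self_nonneg
    nlinarith [hAlb i k]
  -- final assembly
  have hsplit : ∑ i, ∑ j, ⟪u i - u j, W i - W j⟫_ℝ
      = (∑ i, ∑ j, ⟪u i - u j, G i - G j⟫_ℝ) + (-αt * Q)
        + ∑ i, ∑ j, ⟪u i - u j, βt • D i - βt • D j⟫_ℝ := by
    simp_rw [hdec]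
    simp only [Finset.sum_add_distrib]
    rw [hQ]
    simp_rw [← Finset.mul_sum]
  have hbform : bform u u = (2 * (N : ℝ) ^ 2)⁻¹ * Q := rfl
  have hPswap : ∑ i, ⟪D i, u i - m⟫_ℝ = P := by
    rw [hP]
    exact Finset.sum_congr rfl fun i _ => real_inner_comm _ _
  rw [hLHS, hsplit, hS1, hS3, hbform, hPswap]
  have hQ0 : 0 ≤ Q := by
    rw [hQ]
    refine Finset.sum_nonneg fun i _ => Finset.sum_nonneg fun j _ => real_inner_self_nonneg
  have hN2 : (0:ℝ) < (N:ℝ) ^ 2 := by positivity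
  have hgoal : (2 * (N : ℝ) ^ 2)⁻¹ * (2 * ((- ∑ i, ∑ k, A i k * ⟪u i - u k, u i - u k⟫_ℝ)
      + (-αt * Q) + 2 * βt * (N : ℝ) * P))
      ≤ (2 * (N : ℝ) ^ 2)⁻¹ * (2 * ((-astar * Q) + (-αt * Q) + 2 * βt * (N : ℝ) * P)) := by
    have h1 : (0:ℝ) ≤ (2 * (N : ℝ) ^ 2)⁻¹ := by positivity
    apply mul_le_mul_of_nonneg_left _ h1
    linarith [hS1le]
  refine hgoal.trans (le_of_eq ?_)
  field_simp
  ring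


lemma bform_self_eq (hN : 0 < N) (u : Fin N → EuclideanSpace ℝ (Fin d)) :
    2 * (N : ℝ) ^ 2 * bform u u = 2 * (N : ℝ) * ∑ k, ‖u k - meanVec u‖ ^ 2 := by
  have hNne : (N : ℝ) ≠ 0 := Nat.cast_ne_zero.mpr hN.ne'
  have h1 : 2 * (N : ℝ) ^ 2 * bform u u = ∑ i, ∑ j, ⟪u i - u j, u i - u j⟫_ℝ := by
    rw [bform, ← mul_assoc, mul_inv_cancel₀ (by positivity), one_mul]
  rw [h1]
  have key : ∀ i j : Fin N, ⟪u i - u j, u i - u j⟫_ℝ =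
      ‖u i - meanVec u‖ ^ 2 + ‖u j - meanVec u‖ ^ 2
        - 2 * ⟪u i - meanVec u, u j - meanVec u⟫_ℝ := by
    intro i j
    have h : u i - u j = (u i - meanVec u) - (u j - meanVec u) := by abel
    rw [h, real_inner_self_eq_norm_sq, norm_sub_sq_real]
    ring
  simp_rw [key]
  have hz : ∀ i : Fin N, ∑ j, ⟪u i - meanVec u, u j - meanVec u⟫_ℝ = 0 := by
    intro i
    rw [← inner_sum, sum_sub_mean hN, inner_zero_right]
  have row : ∀ i : Fin N, ∑ j, (‖u i - meanVec u‖ ^ 2 + ‖u j - meanVec u‖ ^ 2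
      - 2 * ⟪u i - meanVec u, u j - meanVec u⟫_ℝ)
      = (N : ℝ) * ‖u i - meanVec u‖ ^ 2 + ∑ k, ‖u k - meanVec u‖ ^ 2 := by
    intro i
    rw [Finset.sum_sub_distrib, Finset.sum_add_distrib, ← Finset.mul_sum, hz i, mul_zero,
      sub_zero, Finset.sum_const, Finset.card_univ, Fintype.card_fin, nsmul_eq_mul]
  simp_rw [row]
  rw [Finset.sum_add_distrib, ← Finset.mul_sum, Finset.sum_const, Finset.card_univ,
    Fintype.card_fin, nsmul_eq_mul]
  ring

lemma norm_sub_le_sqrt_bform (hN : 0 < N) (p : Fin N → EuclideanSpace ℝ (Fin d)) (i j : Fin N) :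
    ‖p i - p j‖ ≤ Real.sqrt (2 * N * bform p p) := by
  have hNR : (0 : ℝ) < N := by exact_mod_cast hN
  have hkey : ‖p i - p j‖ ^ 2 ≤ 2 * N * bform p p := by
    have h2 : 2 * (N:ℝ) * bform p p = (N:ℝ)⁻¹ * (2 * (N:ℝ)^2 * bform p p) := by
      field_simp
    rw [h2, bform_self_eq hN, ← mul_assoc]
    have : (N:ℝ)⁻¹ * (2 * N) = 2 := by field_simp
    rw [this]
    set m := meanVec p
    have htri : ‖p i - p j‖ ^ 2 ≤ 2 * (‖p i - m‖ ^ 2 + ‖p j - m‖ ^ 2) := by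
      have h : p i - p j = (p i - m) - (p j - m) := by abel
      have hle : ‖p i - p j‖ ≤ ‖p i - m‖ + ‖p j - m‖ := by
        rw [h]; exact norm_sub_le _ _
      nlinarith [norm_nonneg (p i - p j), norm_nonneg (p i - m), norm_nonneg (p j - m),
        sq_nonneg (‖p i - m‖ - ‖p j - m‖)]
    rcases eq_or_ne i j with rfl | hij
    · simp only [sub_self, norm_zero]
      rw [zero_pow two_ne_zero]
      positivity
    refine htri.trans ?_
    rw [mul_le_mul_iff_right₀ (by norm_num : (0:ℝ) < 2)]
    calc ‖p i - m‖ ^ 2 + ‖p j - m‖ ^ 2 = ∑ k ∈ ({i, j} : Finset (Fin N)), ‖p k - m‖ ^ 2 := by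
          rw [Finset.sum_pair hij]
      _ ≤ ∑ k, ‖p k - m‖ ^ 2 :=
          Finset.sum_le_sum_of_subset_of_nonneg (Finset.subset_univ _)
            (fun k _ _ => by positivity)
  calc ‖p i - p j‖ = Real.sqrt (‖p i - p j‖ ^ 2) := (Real.sqrt_sq (norm_nonneg _)).symm
    _ ≤ Real.sqrt (2 * N * bform p p) := Real.sqrt_le_sqrt hkey

/-- Along any solution of the perturbed Cucker-Smale system,
`dV/dt ≤ -2 a(√(2N X)) V - 2 α V + (2β/N) ∑ᵢ Δᵢ·vᵢ^⊥`. -/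
theorem perturbedCuckerSmale_V_decay
    {d N : ℕ} (hN : 0 < N)
    (a : ℝ → ℝ)
    (ha_pos : ∀ r, 0 ≤ r → 0 < a r)
    (ha_mono : ∀ r s, 0 ≤ r → r ≤ s → a s ≤ a r)
    (ha_bdd : ∃ C, ∀ r, 0 ≤ r → a r ≤ C)
    (ha_lip : ∃ K : NNReal, LipschitzWith K a)
    (α β : ℝ → ℝ)
    (hα : ∀ t, 0 ≤ t → 0 ≤ α t) (hβ : ∀ t, 0 ≤ t → 0 ≤ β t)
    (Δ : Fin N → ℝ → EuclideanSpace ℝ (Fin d))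
    (x v : ℝ → Fin N → EuclideanSpace ℝ (Fin d))
    (hx : ∀ (i : Fin N), ∀ t, 0 ≤ t → HasDerivAt (fun s => x s i) (v t i) t)
    (hv : ∀ (i : Fin N), ∀ t, 0 ≤ t → HasDerivAt (fun s => v s i)
      ((N : ℝ)⁻¹ • ∑ j, a ‖x t i - x t j‖ • (v t j - v t i)
        + α t • (meanVec (v t) - v t i) + β t • Δ i t) t) :
    ∀ t, 0 ≤ t → ∃ V' : ℝ, HasDerivAt (fun s => bform (v s) (v s)) V' t ∧
      V' ≤ -2 * a (Real.sqrt (2 * N * bform (x t) (x t))) * bform (v t) (v t)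
        - 2 * α t * bform (v t) (v t)
        + (2 * β t / N) * ∑ i, ⟪Δ i t, v t i - meanVec (v t)⟫_ℝ := by
  intro t ht
  set W : Fin N → EuclideanSpace ℝ (Fin d) := fun i =>
    (N : ℝ)⁻¹ • ∑ j, a ‖x t i - x t j‖ • (v t j - v t i)
      + α t • (meanVec (v t) - v t i) + β t • Δ i t with hWdef
  refine ⟨(2 * (N : ℝ) ^ 2)⁻¹ *
      ∑ i, ∑ j, (⟪v t i - v t j, W i - W j⟫_ℝ + ⟪W i - W j, v t i - v t j⟫_ℝ), ?_, ?_⟩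
  · have hder : ∀ i j : Fin N, HasDerivAt (fun s => ⟪v s i - v s j, v s i - v s j⟫_ℝ)
        (⟪v t i - v t j, W i - W j⟫_ℝ + ⟪W i - W j, v t i - v t j⟫_ℝ) t := by
      intro i j
      have hij : HasDerivAt (fun s => v s i - v s j) (W i - W j) t :=
        (hv i t ht).sub (hv j t ht)
      exact HasDerivAt.inner ℝ hij hij
    have : HasDerivAt (fun s => ∑ i, ∑ j, ⟪v s i - v s j, v s i - v s j⟫_ℝ)
        (∑ i, ∑ j, (⟪v t i - v t j, W i - W j⟫_ℝ + ⟪W i - W j, v t i - v t j⟫_ℝ)) t :=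
      HasDerivAt.fun_sum fun i _ => HasDerivAt.fun_sum fun j _ => hder i j
    simpa only [bform] using this.const_mul ((2 * (N : ℝ) ^ 2)⁻¹)
  · exact main_ineq hN (a (Real.sqrt (2 * N * bform (x t) (x t)))) (α t) (β t) (hα t ht)
      (fun i j => a ‖x t i - x t j‖)
      (fun i j => show a ‖x t i - x t j‖ = a ‖x t j - x t i‖ by rw [norm_sub_rev])
      (fun i j => ha_mono _ _ (norm_nonneg _) (norm_sub_le_sqrt_bform hN (x t) i j))
      (v t) (fun i => Δ i t) W (fun i => rfl)
end

section
/- Let (x,v) be a solution of the perturbed Cucker-Smale system ẋ_i = v_i, v̇_i = (1/N) Σ_{j=1}^N a(‖x_i − x_j‖)(v_j − v_i) + α(t)(v̄ − v_i) + β(t) Δ_i(t), with β(t) > 0 for all t. Suppose there are T ≥ 0, a function φ : [T,∞) → [0,ℓ] with ℓ < (min_{t ≥ T} α(t)) / (max_{t ≥ T} β(t)), such that Σ_{i=1}^N Δ_i(t)·v_i^⊥(t) ≤ φ(t) Σ_{i=1}^N ‖v_i^⊥(t)‖² for every t ≥ T. Then V(t) ≤ V(T) exp(2 ∫_T^t β(s)(ℓ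 − α(s)/β(s)) ds) for all t ≥ T, V(t) → 0 exponentially fast, and (x,v) tends to consensus. -/
open scoped BigOperators InnerProductSpace
open MeasureTheory Filter

lemma bform_eq {d N : ℕ} (hN : 0 < N) (v w : Fin N → EuclideanSpace ℝ (Fin d)) :
    bform v w = (N : ℝ)⁻¹ * ∑ i, ⟪v i - meanVec v, w i⟫_ℝ := by
  have hN' : (N : ℝ) ≠ 0 := Nat.cast_ne_zero.mpr hN.ne'
  have key : ∑ i, ∑ j, ⟪v i - v j, w i - w j⟫_ℝ
      = 2 * (N : ℝ) * ∑ i, ⟪v i, w i⟫_ℝ - 2 * ∑ i, ∑ j, ⟪v j, w i⟫_ℝ := by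
    have swap : ∑ i, ∑ j, ⟪v i, w j⟫_ℝ = ∑ i, ∑ j, ⟪v j, w i⟫_ℝ := Finset.sum_comm
    simp only [inner_sub_left, inner_sub_right, Finset.sum_sub_distrib,
      Finset.sum_const, Finset.card_univ, Fintype.card_fin, nsmul_eq_mul]
    rw [swap]
    simp only [← Finset.mul_sum]
    ring
  have key2 : ∑ i, ⟪v i - meanVec v, w i⟫_ℝ
      = ∑ i, ⟪v i, w i⟫_ℝ - (N : ℝ)⁻¹ * ∑ i, ∑ j, ⟪v j, w i⟫_ℝ := by
    simp only [meanVec, inner_sub_left, real_inner_smul_left, sum_inner,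
      Finset.sum_sub_distrib, ← Finset.mul_sum]
  rw [bform, key, key2]
  field_simp

lemma sum_sub_meanVec {d N : ℕ} (hN : 0 < N) (v : Fin N → EuclideanSpace ℝ (Fin d)) :
    ∑ i, (v i - meanVec v) = 0 := by
  have hN' : (N : ℝ) ≠ 0 := Nat.cast_ne_zero.mpr hN.ne'
  simp only [Finset.sum_sub_distrib, meanVec, Finset.sum_const, Finset.card_univ,
    Fintype.card_fin, smul_smul]
  rw [← Nat.cast_smul_eq_nsmul ℝ, smul_smul, mul_inv_cancel₀ hN', one_smul, sub_self]

lemma bform_self {d N : ℕ} (hN : 0 < N) (v : Fin N → EuclideanSpace ℝ (Fin d)) :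
    bform v v = (N : ℝ)⁻¹ * ∑ i, ‖v i - meanVec v‖ ^ 2 := by
  rw [bform_eq hN]
  congr 1
  have : ∑ i, ⟪v i - meanVec v, meanVec v⟫_ℝ = 0 := by
    rw [← sum_inner, sum_sub_meanVec hN, inner_zero_left]
  calc ∑ i, ⟪v i - meanVec v, v i⟫_ℝ
      = ∑ i, (⟪v i - meanVec v, v i - meanVec v⟫_ℝ + ⟪v i - meanVec v, meanVec v⟫_ℝ) := by
        refine Finset.sum_congr rfl fun i _ => ?_
        rw [inner_sub_right]; ring
    _ = ∑ i, ‖v i - meanVec v‖ ^ 2 := by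
        rw [Finset.sum_add_distrib, this, add_zero]
        exact Finset.sum_congr rfl fun i _ => real_inner_self_eq_norm_sq _

lemma bform_self_nonneg {d N : ℕ} (hN : 0 < N) (v : Fin N → EuclideanSpace ℝ (Fin d)) :
    0 ≤ bform v v := by
  rw [bform_self hN]
  positivity

lemma kernel_nonpos {d N : ℕ} (A : Fin N → Fin N → ℝ) (hA : ∀ i j, A i j = A j i)
    (hApos : ∀ i j, 0 ≤ A i j) (u : Fin N → EuclideanSpace ℝ (Fin d)) :
    ∑ i, ∑ j, A i j * ⟪u i, u j - u i⟫_ℝ ≤ 0 := by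
  have double : (∑ i, ∑ j, A i j * ⟪u i, u j - u i⟫_ℝ) * 2
      = ∑ i, ∑ j, (- (A i j * ‖u i - u j‖ ^ 2)) := by
    have swap : ∑ i, ∑ j, A i j * ⟪u i, u j - u i⟫_ℝ
        = ∑ i, ∑ j, A j i * ⟪u j, u i - u j⟫_ℝ := Finset.sum_comm
    calc (∑ i, ∑ j, A i j * ⟪u i, u j - u i⟫_ℝ) * 2
        = ∑ i, ∑ j, (A i j * ⟪u i, u j - u i⟫_ℝ + A j i * ⟪u j, u i - u j⟫_ℝ) := by
          simp only [Finset.sum_add_distrib, ← swap]; ring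
      _ = ∑ i, ∑ j, (- (A i j * ‖u i - u j‖ ^ 2)) := by
          refine Finset.sum_congr rfl fun i _ => Finset.sum_congr rfl fun j _ => ?_
          rw [hA j i]
          have h1 : ⟪u i, u j - u i⟫_ℝ + ⟪u j, u i - u j⟫_ℝ = - ‖u i - u j‖ ^ 2 := by
            rw [← real_inner_self_eq_norm_sq]
            simp only [inner_sub_left, inner_sub_right]
            rw [real_inner_comm (u j) (u i)]
            ring
          linear_combination A i j * h1
  have hnp : ∑ i, ∑ j, (- (A i j * ‖u i - u j‖ ^ 2)) ≤ 0 :=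
    Finset.sum_nonpos fun i _ => Finset.sum_nonpos fun j _ =>
      neg_nonpos.mpr (mul_nonneg (hApos i j) (sq_nonneg _))
  linarith [double, hnp]

lemma bform_W_le {d N : ℕ} (hN : 0 < N)
    (A : Fin N → Fin N → ℝ) (hAsymm : ∀ i j, A i j = A j i) (hApos : ∀ i j, 0 ≤ A i j)
    (αt βt ℓ φt : ℝ) (hβt : 0 < βt) (hφ0 : 0 ≤ φt) (hφℓ : φt ≤ ℓ)
    (v D : Fin N → EuclideanSpace ℝ (Fin d))
    (hpert : ∑ i, ⟪D i, v i - meanVec v⟫_ℝ ≤ φt * ∑ i, ‖v i - meanVec v‖ ^ 2) :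
    bform v (fun i => (N : ℝ)⁻¹ • ∑ j, A i j • (v j - v i) + αt • (meanVec v - v i) + βt • D i)
      ≤ (βt * ℓ - αt) * bform v v := by
  have hN' : (0 : ℝ) < N := Nat.cast_pos.mpr hN
  set u : Fin N → EuclideanSpace ℝ (Fin d) := fun i => v i - meanVec v with hu
  set S : ℝ := ∑ i, ‖u i‖ ^ 2 with hS
  have hS0 : 0 ≤ S := Finset.sum_nonneg fun i _ => sq_nonneg _
  rw [bform_eq hN, bform_self hN]
  have expand : ∑ i, ⟪u i, (N : ℝ)⁻¹ • ∑ j, A i j • (v j - v i)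
        + αt • (meanVec v - v i) + βt • D i⟫_ℝ
      = (N : ℝ)⁻¹ * (∑ i, ∑ j, A i j * ⟪u i, u j - u i⟫_ℝ) - αt * S
        + βt * ∑ i, ⟪D i, u i⟫_ℝ := by
    have term1 : ∀ i, ⟪u i, (N : ℝ)⁻¹ • ∑ j, A i j • (v j - v i)⟫_ℝ
        = (N : ℝ)⁻¹ * ∑ j, A i j * ⟪u i, u j - u i⟫_ℝ := by
      intro i
      rw [real_inner_smul_right, inner_sum]
      congr 1
      refine Finset.sum_congr rfl fun j _ => ?_
      rw [real_inner_smul_right]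
      congr 2
      simp [hu, sub_sub_sub_cancel_right]
    have term2 : ∀ i, ⟪u i, αt • (meanVec v - v i)⟫_ℝ = - (αt * ‖u i‖ ^ 2) := by
      intro i
      rw [real_inner_smul_right]
      have : meanVec v - v i = - u i := by simp [hu]
      rw [this, inner_neg_right, real_inner_self_eq_norm_sq]
      ring
    have term3 : ∀ i, ⟪u i, βt • D i⟫_ℝ = βt * ⟪D i, u i⟫_ℝ := by
      intro i
      rw [real_inner_smul_right, real_inner_comm]
    simp only [inner_add_right, Finset.sum_add_distrib, term1, term2, term3,
      ← Finset.mul_sum, Finset.sum_neg_distrib]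
    ring
  rw [expand]
  have hkernel : (N : ℝ)⁻¹ * (∑ i, ∑ j, A i j * ⟪u i, u j - u i⟫_ℝ) ≤ 0 := by
    have := kernel_nonpos A hAsymm hApos u
    have h2 : (0:ℝ) ≤ (N : ℝ)⁻¹ := by positivity
    exact mul_nonpos_of_nonneg_of_nonpos h2 this
  have hD : βt * ∑ i, ⟪D i, u i⟫_ℝ ≤ βt * (ℓ * S) := by
    apply mul_le_mul_of_nonneg_left _ hβt.le
    calc ∑ i, ⟪D i, u i⟫_ℝ ≤ φt * S := hpert
      _ ≤ ℓ * S := mul_le_mul_of_nonneg_right hφℓ hS0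
  have goal2 : (N : ℝ)⁻¹ * ((N : ℝ)⁻¹ * (∑ i, ∑ j, A i j * ⟪u i, u j - u i⟫_ℝ) - αt * S
      + βt * (ℓ * S)) ≤ (βt * ℓ - αt) * ((N : ℝ)⁻¹ * S) := by
    have h2 : (0:ℝ) ≤ (N : ℝ)⁻¹ := by positivity
    nlinarith [hkernel]
  calc (N : ℝ)⁻¹ * ((N : ℝ)⁻¹ * (∑ i, ∑ j, A i j * ⟪u i, u j - u i⟫_ℝ) - αt * S
        + βt * ∑ i, ⟪D i, u i⟫_ℝ)
      ≤ (N : ℝ)⁻¹ * ((N : ℝ)⁻¹ * (∑ i, ∑ j, A i j * ⟪u i, u j - u i⟫_ℝ) - αt * S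
        + βt * (ℓ * S)) := by
        apply mul_le_mul_of_nonneg_left _ (by positivity)
        linarith [hD]
    _ ≤ (βt * ℓ - αt) * ((N : ℝ)⁻¹ * S) := goal2

lemma hasDerivAt_bform_self {d N : ℕ} {v : ℝ → Fin N → EuclideanSpace ℝ (Fin d)}
    {W : Fin N → EuclideanSpace ℝ (Fin d)} {t : ℝ}
    (hv : ∀ i, HasDerivAt (fun s => v s i) (W i) t) :
    HasDerivAt (fun s => bform (v s) (v s)) (2 * bform (v t) W) t := by
  have hsum : HasDerivAt (fun s => ∑ i, ∑ j, ⟪v s i - v s j, v s i - v s j⟫_ℝ)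
      (∑ i, ∑ j, 2 * ⟪v t i - v t j, W i - W j⟫_ℝ) t := by
    refine HasDerivAt.fun_sum fun i _ => HasDerivAt.fun_sum fun j _ => ?_
    have h := ((hv i).sub (hv j)).inner ℝ ((hv i).sub (hv j))
    refine h.congr_deriv ?_
    simp only [Pi.sub_apply]
    rw [real_inner_comm (W i - W j) (v t i - v t j)]
    ring
  have := hsum.const_mul ((2 * (N : ℝ) ^ 2)⁻¹)
  refine this.congr_deriv ?_
  simp only [bform, Finset.mul_sum]
  refine Finset.sum_congr rfl fun i _ => Finset.sum_congr rfl fun j _ => ?_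
  ring

/-- If the perturbations satisfy
`∑ᵢ Δᵢ(t)·vᵢ^⊥(t) ≤ φ(t) ∑ᵢ ‖vᵢ^⊥(t)‖²` for `t ≥ T`, with `φ` taking values in
`[0,ℓ]` and `ℓ < (min_{t≥T} α)/(max_{t≥T} β)`, then
`V(t) ≤ V(T) exp(2 ∫_T^t β(s)(ℓ - α(s)/β(s)) ds)`, `V(t) → 0` and the solution
tends to consensus. -/
theorem perturbedCuckerSmale_consensus_of_small_perturbation
    {d N : ℕ} (hN : 0 < N)
    (a : ℝ → ℝ)
    (ha_pos : ∀ r, 0 ≤ r → 0 < a r)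
    (ha_mono : ∀ r s, 0 ≤ r → r ≤ s → a s ≤ a r)
    (ha_bdd : ∃ C, ∀ r, 0 ≤ r → a r ≤ C)
    (ha_lip : ∃ K : NNReal, LipschitzWith K a)
    (α β : ℝ → ℝ)
    (hα : ∀ t, 0 ≤ t → 0 ≤ α t) (hβ : ∀ t, 0 ≤ t → 0 < β t)
    (Δ : Fin N → ℝ → EuclideanSpace ℝ (Fin d))
    (x v : ℝ → Fin N → EuclideanSpace ℝ (Fin d))
    (hx : ∀ (i : Fin N), ∀ t, 0 ≤ t → HasDerivAt (fun s => x s i) (v t i) t)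
    (hv : ∀ (i : Fin N), ∀ t, 0 ≤ t → HasDerivAt (fun s => v s i)
      ((N : ℝ)⁻¹ • ∑ j, a ‖x t i - x t j‖ • (v t j - v t i)
        + α t • (meanVec (v t) - v t i) + β t • Δ i t) t)
    (T : ℝ) (hT : 0 ≤ T)
    (ℓ αmin βmax : ℝ)
    (hαmin : ∀ t, T ≤ t → αmin ≤ α t)
    (hβmax : ∀ t, T ≤ t → β t ≤ βmax)
    (hℓ : ℓ < αmin / βmax)
    (φ : ℝ → ℝ) (hφ : ∀ t, T ≤ t → φ t ∈ Set.Icc 0 ℓ)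
    (hpert : ∀ t, T ≤ t →
      ∑ i, ⟪Δ i t, v t i - meanVec (v t)⟫_ℝ ≤ φ t * ∑ i, ‖v t i - meanVec (v t)‖ ^ 2) :
    (∀ t, T ≤ t → bform (v t) (v t) ≤
      bform (v T) (v T) * Real.exp (2 * ∫ s in T..t, β s * (ℓ - α s / β s))) ∧
    Tendsto (fun t => bform (v t) (v t)) atTop (nhds 0) ∧
    ∀ i, Tendsto (fun t => ‖v t i - meanVec (v t)‖) atTop (nhds 0) := by
  set V : ℝ → ℝ := fun t => bform (v t) (v t) with hVdef
  set W : ℝ → Fin N → EuclideanSpace ℝ (Fin d) := fun t i =>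
    (N : ℝ)⁻¹ • ∑ j, a ‖x t i - x t j‖ • (v t j - v t i)
      + α t • (meanVec (v t) - v t i) + β t • Δ i t with hWdef
  have hV0 : ∀ t, 0 ≤ V t := fun t => bform_self_nonneg hN (v t)
  have hVderiv : ∀ t, 0 ≤ t → HasDerivAt V (2 * bform (v t) (W t)) t := fun t ht =>
    hasDerivAt_bform_self (fun i => hv i t ht)
  have hℓ0 : 0 ≤ ℓ := le_trans (hφ T le_rfl).1 (hφ T le_rfl).2
  have hβmax0 : 0 < βmax := lt_of_lt_of_le (hβ T hT) (hβmax T le_rfl)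
  set c : ℝ := αmin - ℓ * βmax with hcdef
  have hc : 0 < c := by
    have := (lt_div_iff₀ hβmax0).mp hℓ
    simp only [hcdef]; linarith
  have hslope : ∀ s, T ≤ s → β s * ℓ - α s ≤ -c := by
    intro s hs
    have h1 : β s * ℓ ≤ βmax * ℓ := mul_le_mul_of_nonneg_right (hβmax s hs) hℓ0
    have h2 := hαmin s hs
    simp only [hcdef]; linarith
  have hkey : ∀ s, T ≤ s → 2 * bform (v s) (W s) ≤ 2 * (β s * ℓ - α s) * V s := by
    intro s hs
    have hb := bform_W_le hN (fun i j => a ‖x s i - x s j‖)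
      (fun i j => by show a ‖x s i - x s j‖ = a ‖x s j - x s i‖; rw [norm_sub_rev]) (fun i j => (ha_pos _ (norm_nonneg _)).le)
      (α s) (β s) ℓ (φ s) (hβ s (hT.trans hs)) (hφ s hs).1 (hφ s hs).2
      (v s) (fun i => Δ i s) (hpert s hs)
    calc 2 * bform (v s) (W s) ≤ 2 * ((β s * ℓ - α s) * bform (v s) (v s)) := by linarith [hb]
      _ = 2 * (β s * ℓ - α s) * V s := by rw [hVdef]; ring
  have hb2 : ∀ s, T ≤ s → 2 * bform (v s) (W s) ≤ -(2 * c) * V s := by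
    intro s hs
    refine le_trans (hkey s hs) ?_
    have := mul_le_mul_of_nonneg_right
      (by linarith [hslope s hs] : 2 * (β s * ℓ - α s) ≤ -(2 * c)) (hV0 s)
    linarith [this]
  have hlin : ∀ s : ℝ, HasDerivAt (fun y => 2 * c * (y - T)) (2 * c) s := by
    intro s
    simpa using ((hasDerivAt_id s).sub_const T).const_mul (2 * c)
  set Efun : ℝ → ℝ := fun s => V s * Real.exp (2 * c * (s - T)) with hEdef
  have hEderiv : ∀ s, 0 ≤ s → HasDerivAt Efun
      (2 * bform (v s) (W s) * Real.exp (2 * c * (s - T))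
        + V s * (Real.exp (2 * c * (s - T)) * (2 * c))) s := fun s hs =>
    (hVderiv s hs).mul (hlin s).exp
  have hEanti : AntitoneOn Efun (Set.Ici T) := by
    apply antitoneOn_of_deriv_nonpos (convex_Ici T)
    · exact fun s hs => ((hEderiv s (hT.trans hs)).continuousAt).continuousWithinAt
    · intro s hs
      rw [interior_Ici] at hs
      exact ((hEderiv s (hT.trans hs.le)).differentiableAt).differentiableWithinAt
    · intro s hs
      rw [interior_Ici] at hs
      rw [(hEderiv s (hT.trans hs.le)).deriv]
      have h1 := mul_le_mul_of_nonneg_right (hb2 s hs.le) (Real.exp_pos (2 * c * (s - T))).le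
      nlinarith [h1]
  have hVle : ∀ s t, T ≤ s → s ≤ t → V t ≤ V s := by
    intro s t hs hst
    have h := hEanti (Set.mem_Ici.mpr hs) (Set.mem_Ici.mpr (hs.trans hst)) hst
    have e1 : Real.exp (2 * c * (s - T)) ≤ Real.exp (2 * c * (t - T)) :=
      Real.exp_le_exp.mpr (by nlinarith [hc])
    have h2 := le_trans h (mul_le_mul_of_nonneg_left e1 (hV0 s))
    exact le_of_mul_le_mul_right h2 (Real.exp_pos _)
  have hVdecay : ∀ t, T ≤ t → V t ≤ V T * Real.exp (-(2 * c) * (t - T)) := by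
    intro t ht
    have h := hEanti (Set.mem_Ici.mpr le_rfl) (Set.mem_Ici.mpr ht) ht
    have hepos := Real.exp_pos (2 * c * (t - T))
    rw [show -(2 * c) * (t - T) = -(2 * c * (t - T)) by ring, Real.exp_neg,
      ← div_eq_mul_inv, le_div_iff₀ hepos]
    simpa [hEdef] using h
  have htendV : Tendsto V atTop (nhds 0) := by
    have htend : Tendsto (fun t => V T * Real.exp (-(2 * c) * (t - T))) atTop (nhds 0) := by
      have h1 : Tendsto (fun t : ℝ => -(2 * c) * (t - T)) atTop atBot := by
        apply Tendsto.const_mul_atTop_of_neg (by linarith : -(2 * c) < 0)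
        exact tendsto_atTop_add_const_right atTop (-T) tendsto_id
      have h2 := Real.tendsto_exp_atBot.comp h1
      have := h2.const_mul (V T)
      simpa using this
    refine tendsto_of_tendsto_of_tendsto_of_le_of_le' tendsto_const_nhds htend ?_ ?_
    · exact Eventually.of_forall fun t => hV0 t
    · filter_upwards [eventually_ge_atTop T] with t ht
      exact hVdecay t ht
  refine ⟨?_, htendV, ?_⟩
  · -- part 1
    intro t ht
    rcases (hV0 t).eq_or_lt with hVt | hVt
    · have hgoal : V t ≤ V T * Real.exp (2 * ∫ s in T..t, β s * (ℓ - α s / β s)) := by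
        rw [← hVt]
        exact mul_nonneg (hV0 T) (Real.exp_pos _).le
      exact hgoal
    · by_cases hint : IntervalIntegrable (fun s => β s * (ℓ - α s / β s)) volume T t
      · have hpos : ∀ s ∈ Set.Icc T t, 0 < V s := fun s hs =>
          lt_of_lt_of_le hVt (hVle s t hs.1 hs.2)
        have hVT : 0 < V T := hpos T ⟨le_rfl, ht⟩
        have hcont : ContinuousOn (fun y => Real.log (V y)) (Set.Icc T t) := by
          refine ContinuousOn.log ?_ (fun s hs => (hpos s hs).ne')
          exact fun s hs => ((hVderiv s (hT.trans hs.1)).continuousAt).continuousWithinAt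
        have hderiv : ∀ s ∈ Set.Ioo T t, HasDerivWithinAt (fun y => Real.log (V y))
            ((2 * bform (v s) (W s)) / V s) (Set.Ioi s) s := fun s hs =>
          (((hVderiv s (hT.trans hs.1.le)).log (hpos s ⟨hs.1.le, hs.2.le⟩).ne')).hasDerivWithinAt
        have hint2 : IntervalIntegrable (fun s => 2 * (β s * (ℓ - α s / β s))) volume T t :=
          hint.const_mul 2
        have φint : IntegrableOn (fun s => 2 * (β s * (ℓ - α s / β s))) (Set.Icc T t) := by
          rwa [intervalIntegrable_iff_integrableOn_Icc_of_le ht] at hint2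
        have hφg : ∀ s ∈ Set.Ioo T t,
            (2 * bform (v s) (W s)) / V s ≤ 2 * (β s * (ℓ - α s / β s)) := by
          intro s hs
          have hβs : 0 < β s := hβ s (hT.trans hs.1.le)
          have heq : β s * (ℓ - α s / β s) = β s * ℓ - α s := by field_simp
          rw [heq, div_le_iff₀ (hpos s ⟨hs.1.le, hs.2.le⟩)]
          calc 2 * bform (v s) (W s) ≤ 2 * (β s * ℓ - α s) * V s := hkey s hs.1.le
            _ = 2 * (β s * ℓ - α s) * V s := by ring
        have hftc := intervalIntegral.sub_le_integral_of_hasDeriv_right_of_le ht hcont hderiv φint hφg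
        rw [intervalIntegral.integral_const_mul] at hftc
        calc V t = Real.exp (Real.log (V t)) := (Real.exp_log hVt).symm
          _ ≤ Real.exp (Real.log (V T) + 2 * ∫ s in T..t, β s * (ℓ - α s / β s)) :=
            Real.exp_le_exp.mpr (by linarith)
          _ = V T * Real.exp (2 * ∫ s in T..t, β s * (ℓ - α s / β s)) := by
            rw [Real.exp_add, Real.exp_log hVT]
      · rw [intervalIntegral.integral_undef hint]
        simp only [mul_zero, Real.exp_zero, mul_one]
        exact hVle T t le_rfl ht
  · -- part 3
    intro i
    have hbound : ∀ t, ‖v t i - meanVec (v t)‖ ≤ Real.sqrt ((N : ℝ) * V t) := by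
      intro t
      have hsum : ‖v t i - meanVec (v t)‖ ^ 2 ≤ ∑ j, ‖v t j - meanVec (v t)‖ ^ 2 :=
        Finset.single_le_sum (f := fun j => ‖v t j - meanVec (v t)‖ ^ 2) (fun j _ => sq_nonneg _) (Finset.mem_univ i)
      have hNS : (N : ℝ) * V t = ∑ j, ‖v t j - meanVec (v t)‖ ^ 2 := by
        have hN' : (N : ℝ) ≠ 0 := Nat.cast_ne_zero.mpr hN.ne'
        show (N : ℝ) * bform (v t) (v t) = _
        rw [bform_self hN]
        field_simp
      have hrw : ‖v t i - meanVec (v t)‖ = Real.sqrt (‖v t i - meanVec (v t)‖ ^ 2) :=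
        (Real.sqrt_sq (norm_nonneg _)).symm
      rw [hrw]
      exact Real.sqrt_le_sqrt (by rw [hNS]; exact hsum)
    have hsq : Tendsto (fun t => Real.sqrt ((N : ℝ) * V t)) atTop (nhds 0) := by
      have := (htendV.const_mul (N : ℝ)).sqrt
      simpa using this
    refine tendsto_of_tendsto_of_tendsto_of_le_of_le' tendsto_const_nhds hsq ?_ ?_
    · exact Eventually.of_forall fun t => norm_nonneg _
    · exact Eventually.of_forall fun t => hbound t
end

section
/- Fix M > 0, an initial condition (x^0,v^0) ∈ (ℝ^d)^N × (ℝ^d)^N with V_0 = B(v^0,v^0) > 0, and 0 < α ≤ M/(N √V_0). Consider the controlled Cucker-Smale system ẋ_i = v_i, v̇_i = (1/N) Σ_{j=1}^N a(‖x_i − x_j‖)(v_j − v_i) + u_i(t) with feedback control u(t) = −α v^⊥(t), i.e. u_i(t) = −α (v_i(t) − v̄(t)). Then: (1) the control is admissible, i.e. Σ_{i=1}^N ‖u_i(t)‖ ≤ M for every t ≥ 0; (2) V(t) ≤ e^{−2αt} V(0) for all t ≥ 0, so the associated solution tends to consensus and reaches the consensus region in finite time. -/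
open scoped BigOperators InnerProductSpace
open MeasureTheory Filter

section Aux

variable {d N : ℕ}

lemma bform_nonneg (w : Fin N → EuclideanSpace ℝ (Fin d)) : 0 ≤ bform w w := by
  apply mul_nonneg (by positivity)
  apply Finset.sum_nonneg; intro i _; apply Finset.sum_nonneg; intro j _
  exact real_inner_self_nonneg

lemma sum_sum_inner_sub (w : Fin N → EuclideanSpace ℝ (Fin d)) :
    ∑ i, ∑ j, ⟪w i - w j, w i - w j⟫_ℝ
      = 2 * N * ∑ i, ⟪w i, w i⟫_ℝ - 2 * ⟪∑ i, w i, ∑ i, w i⟫_ℝ := by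
  have h : ∀ i j : Fin N, ⟪w i - w j, w i - w j⟫_ℝ
      = ⟪w i, w i⟫_ℝ + ⟪w j, w j⟫_ℝ - 2 * ⟪w i, w j⟫_ℝ := by
    intro i j
    rw [inner_sub_sub_self]
    have := real_inner_comm (w j) (w i)
    linarith
  simp only [h]
  simp only [Finset.sum_sub_distrib, Finset.sum_add_distrib, Finset.sum_const,
    Finset.card_univ, Fintype.card_fin, nsmul_eq_mul, ← Finset.mul_sum,
    ← inner_sum, ← sum_inner]
  ring

lemma bform_eq_sum_sq (hN : 0 < N) (w : Fin N → EuclideanSpace ℝ (Fin d)) :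
    bform w w = (N : ℝ)⁻¹ * ∑ i, ‖w i - meanVec w‖ ^ 2 := by
  have hN' : (N : ℝ) ≠ 0 := Nat.cast_ne_zero.mpr hN.ne'
  have h : ∀ i : Fin N, ‖w i - meanVec w‖ ^ 2
      = ⟪w i, w i⟫_ℝ - (2 * (N:ℝ)⁻¹) * ⟪w i, ∑ j, w j⟫_ℝ
        + (N:ℝ)⁻¹^2 * ⟪∑ j, w j, ∑ j, w j⟫_ℝ := by
    intro i
    rw [← real_inner_self_eq_norm_sq, inner_sub_sub_self, meanVec,
      real_inner_smul_left, real_inner_smul_right, real_inner_smul_left,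
      real_inner_smul_right, real_inner_comm (∑ j, w j) (w i)]
    ring
  simp only [h, Finset.sum_add_distrib, Finset.sum_sub_distrib, ← Finset.mul_sum,
    Finset.sum_const, Finset.card_univ, Fintype.card_fin, nsmul_eq_mul, ← sum_inner]
  rw [bform, sum_sum_inner_sub]
  field_simp
  ring

lemma sum_norm_sub_mean_le (hN : 0 < N) (w : Fin N → EuclideanSpace ℝ (Fin d)) :
    ∑ i, ‖w i - meanVec w‖ ≤ N * Real.sqrt (bform w w) := by
  have h1 : (∑ i, ‖w i - meanVec w‖) ^ 2 ≤ (N:ℝ) * ∑ i, ‖w i - meanVec w‖ ^ 2 := by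
    simpa using sq_sum_le_card_mul_sum_sq
      (s := Finset.univ) (f := fun i => ‖w i - meanVec w‖)
  have h2 : (N:ℝ) * ∑ i, ‖w i - meanVec w‖ ^ 2 = (N:ℝ)^2 * bform w w := by
    rw [bform_eq_sum_sq hN w]
    have hN' : (N : ℝ) ≠ 0 := Nat.cast_ne_zero.mpr hN.ne'
    field_simp
  have h3 : (0:ℝ) ≤ ∑ i, ‖w i - meanVec w‖ :=
    Finset.sum_nonneg fun i _ => norm_nonneg _
  calc ∑ i, ‖w i - meanVec w‖ = Real.sqrt ((∑ i, ‖w i - meanVec w‖)^2) :=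
        (Real.sqrt_sq h3).symm
    _ ≤ Real.sqrt ((N:ℝ)^2 * bform w w) := Real.sqrt_le_sqrt (by linarith)
    _ = N * Real.sqrt (bform w w) := by
        rw [Real.sqrt_mul (by positivity), Real.sqrt_sq (by positivity)]

lemma norm_sub_mean_le (hN : 0 < N) (w : Fin N → EuclideanSpace ℝ (Fin d)) (i : Fin N) :
    ‖w i - meanVec w‖ ≤ Real.sqrt ((N:ℝ) * bform w w) := by
  have h1 : ‖w i - meanVec w‖^2 ≤ ∑ j, ‖w j - meanVec w‖^2 :=
    Finset.single_le_sum (f := fun j => ‖w j - meanVec w‖^2)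
      (fun j _ => sq_nonneg _) (Finset.mem_univ i)
  have h2 : ∑ j, ‖w j - meanVec w‖^2 = (N:ℝ) * bform w w := by
    rw [bform_eq_sum_sq hN w]
    have hN' : (N : ℝ) ≠ 0 := Nat.cast_ne_zero.mpr hN.ne'
    field_simp
  calc ‖w i - meanVec w‖ = Real.sqrt (‖w i - meanVec w‖^2) :=
        (Real.sqrt_sq (norm_nonneg _)).symm
    _ ≤ Real.sqrt ((N:ℝ) * bform w w) := Real.sqrt_le_sqrt (by linarith)

lemma norm_sub_le_of_bform (w : Fin N → EuclideanSpace ℝ (Fin d)) (i j : Fin N) :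
    ‖w i - w j‖ ≤ Real.sqrt 2 * N * Real.sqrt (bform w w) := by
  have h1 : ‖w i - w j‖^2 ≤ 2 * (N:ℝ)^2 * bform w w := by
    have hterm : ‖w i - w j‖^2 ≤ ∑ i', ∑ j', ⟪w i' - w j', w i' - w j'⟫_ℝ := by
      rw [← real_inner_self_eq_norm_sq]
      calc ⟪w i - w j, w i - w j⟫_ℝ ≤ ∑ j', ⟪w i - w j', w i - w j'⟫_ℝ :=
            Finset.single_le_sum (f := fun j' => ⟪w i - w j', w i - w j'⟫_ℝ)
              (fun k _ => real_inner_self_nonneg) (Finset.mem_univ j)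
        _ ≤ ∑ i', ∑ j', ⟪w i' - w j', w i' - w j'⟫_ℝ :=
            Finset.single_le_sum (f := fun i' => ∑ j', ⟪w i' - w j', w i' - w j'⟫_ℝ)
              (fun k _ => Finset.sum_nonneg fun l _ => real_inner_self_nonneg)
              (Finset.mem_univ i)
    rcases Nat.eq_zero_or_pos N with h | h
    · exact absurd i.pos (by omega)
    · have hN' : (2 * (N:ℝ)^2) ≠ 0 := by positivity
      rw [bform]
      rw [mul_inv_cancel_left₀ hN']
      exact hterm
  calc ‖w i - w j‖ = Real.sqrt (‖w i - w j‖^2) := (Real.sqrt_sq (norm_nonneg _)).symm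
    _ ≤ Real.sqrt (2 * (N:ℝ)^2 * bform w w) := Real.sqrt_le_sqrt h1
    _ = Real.sqrt 2 * N * Real.sqrt (bform w w) := by
        rw [Real.sqrt_mul (by positivity), Real.sqrt_mul (by positivity),
          Real.sqrt_sq (by positivity)]

lemma dissip (A : Fin N → Fin N → ℝ) (hsym : ∀ i j, A i j = A j i)
    (hpos : ∀ i j, 0 ≤ A i j) (w : Fin N → EuclideanSpace ℝ (Fin d)) :
    ∑ i, ∑ j, ⟪w i - w j,
        ((N:ℝ)⁻¹ • ∑ k, A i k • (w k - w i)) - ((N:ℝ)⁻¹ • ∑ k, A j k • (w k - w j))⟫_ℝ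
      ≤ 0 := by
  set F : Fin N → EuclideanSpace ℝ (Fin d) := fun i => (N:ℝ)⁻¹ • ∑ k, A i k • (w k - w i)
    with hF
  have hFsum : ∑ i, F i = 0 := by
    rw [hF, ← Finset.smul_sum]
    have : ∑ i, ∑ k, A i k • (w k - w i) = 0 := by
      have h2 : ∑ i, ∑ k, A i k • (w k - w i) = ∑ k, ∑ i, A i k • (w k - w i) :=
        Finset.sum_comm
      have h3 : ∑ k, ∑ i, A i k • (w k - w i) = -∑ i, ∑ k, A i k • (w k - w i) := by
        rw [← Finset.sum_neg_distrib]
        apply Finset.sum_congr rfl; intro i _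
        rw [← Finset.sum_neg_distrib]
        apply Finset.sum_congr rfl; intro k _
        rw [hsym k i]
        module
      have h4 := h2.trans h3
      have h5 : (2:ℝ) • ∑ i, ∑ k, A i k • (w k - w i) = 0 := by
        rw [two_smul]
        nth_rewrite 2 [h4]
        exact add_neg_cancel _
      rcases smul_eq_zero.mp h5 with h | h
      · norm_num at h
      · exact h
    rw [this, smul_zero]
  show ∑ i, ∑ j, ⟪w i - w j, F i - F j⟫_ℝ ≤ 0
  have hsplit : ∑ i, ∑ j, ⟪w i - w j, F i - F j⟫_ℝ
      = 2 * ∑ i, ∑ j, ⟪w i - w j, F i⟫_ℝ := by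
    have h1 : ∀ i j : Fin N, ⟪w i - w j, F i - F j⟫_ℝ
        = ⟪w i - w j, F i⟫_ℝ - ⟪w i - w j, F j⟫_ℝ := fun i j => inner_sub_right _ _ _
    simp only [h1, Finset.sum_sub_distrib]
    have h2 : ∑ i, ∑ j, ⟪w i - w j, F j⟫_ℝ = -∑ i, ∑ j, ⟪w i - w j, F i⟫_ℝ := by
      rw [Finset.sum_comm, ← Finset.sum_neg_distrib]
      apply Finset.sum_congr rfl; intro i _
      rw [← Finset.sum_neg_distrib]
      apply Finset.sum_congr rfl; intro j _
      rw [← neg_sub (w i) (w j), inner_neg_left]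
    rw [h2]; ring
  rw [hsplit]
  have hT : ∑ i, ∑ j, ⟪w i - w j, F i⟫_ℝ = (N:ℝ) * ∑ i, ⟪w i, F i⟫_ℝ := by
    have h1 : ∀ i : Fin N, ∑ j, ⟪w i - w j, F i⟫_ℝ
        = (N:ℝ) * ⟪w i, F i⟫_ℝ - ⟪∑ j, w j, F i⟫_ℝ := by
      intro i
      simp only [inner_sub_left (𝕜 := ℝ)]
      rw [Finset.sum_sub_distrib, Finset.sum_const, Finset.card_univ, Fintype.card_fin,
        nsmul_eq_mul, ← sum_inner]
    simp only [h1, Finset.sum_sub_distrib, ← sum_inner, ← Finset.mul_sum]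
    rw [← inner_sum, hFsum, inner_zero_right, sub_zero]
  rw [hT]
  have hC : ∑ i, ⟪w i, F i⟫_ℝ ≤ 0 := by
    have h1 : ∀ i : Fin N, ⟪w i, F i⟫_ℝ
        = (N:ℝ)⁻¹ * ∑ k, A i k * ⟪w i, w k - w i⟫_ℝ := by
      intro i
      rw [hF]
      simp only [real_inner_smul_right, inner_sum]
    simp only [h1, ← Finset.mul_sum]
    have hG : ∑ i, ∑ k, A i k * ⟪w i, w k - w i⟫_ℝ ≤ 0 := by
      have hsw : ∑ i, ∑ k, A i k * ⟪w i, w k - w i⟫_ℝ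
          = ∑ i, ∑ k, A k i * ⟪w k, w i - w k⟫_ℝ := Finset.sum_comm
      have h2 : 2 * ∑ i, ∑ k, A i k * ⟪w i, w k - w i⟫_ℝ
          = ∑ i, ∑ k, -(A i k * ⟪w i - w k, w i - w k⟫_ℝ) := by
        rw [two_mul]
        nth_rewrite 2 [hsw]
        rw [← Finset.sum_add_distrib]
        apply Finset.sum_congr rfl; intro i _
        rw [← Finset.sum_add_distrib]
        apply Finset.sum_congr rfl; intro k _
        simp only [hsym k i, inner_sub_left (𝕜 := ℝ), inner_sub_right (𝕜 := ℝ)]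
        rw [real_inner_comm (w k) (w i)]
        ring
      have h3 : ∑ i, ∑ k, -(A i k * ⟪w i - w k, w i - w k⟫_ℝ) ≤ 0 := by
        apply Finset.sum_nonpos; intro i _
        apply Finset.sum_nonpos; intro k _
        simp only [neg_nonpos]
        exact mul_nonneg (hpos i k) real_inner_self_nonneg
      linarith
    have : (0:ℝ) ≤ (N:ℝ)⁻¹ := by positivity
    exact mul_nonpos_of_nonneg_of_nonpos this hG
  have : (0:ℝ) ≤ (N:ℝ) := Nat.cast_nonneg N
  nlinarith

lemma gronwall_decay {V : ℝ → ℝ} {c : ℝ}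
    (hV : ∀ t, 0 ≤ t → ∃ D, HasDerivAt V D t ∧ D ≤ -c * V t) :
    ∀ t, 0 ≤ t → V t ≤ Real.exp (-c * t) * V 0 := by
  classical
  set D : ℝ → ℝ := fun t => if h : 0 ≤ t then (hV t h).choose else 0 with hD
  have hDspec : ∀ t, 0 ≤ t → HasDerivAt V (D t) t ∧ D t ≤ -c * V t := by
    intro t ht
    simp only [hD, dif_pos ht]
    exact (hV t ht).choose_spec
  set G : ℝ → ℝ := fun t => Real.exp (c * t) * V t with hG
  have hGd : ∀ t, 0 ≤ t → HasDerivAt G (Real.exp (c * t) * (c * V t + D t)) t := by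
    intro t ht
    have h1 : HasDerivAt (fun s => Real.exp (c * s)) (Real.exp (c * t) * c) t := by
      simpa using ((hasDerivAt_id t).const_mul c).exp
    have := h1.fun_mul (hDspec t ht).1
    exact this.congr_deriv (by ring)
  have hanti : AntitoneOn G (Set.Ici 0) := by
    apply antitoneOn_of_hasDerivWithinAt_nonpos (convex_Ici 0)
      (f' := fun t => Real.exp (c * t) * (c * V t + D t))
    · intro t ht
      exact ((hGd t ht).continuousAt).continuousWithinAt
    · intro t ht
      rw [interior_Ici] at ht
      exact (hGd t (le_of_lt ht)).hasDerivWithinAt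
    · intro t ht
      rw [interior_Ici] at ht
      have h2 := (hDspec t (le_of_lt ht)).2
      have h3 : c * V t + D t ≤ 0 := by linarith
      exact mul_nonpos_of_nonneg_of_nonpos (Real.exp_pos _).le h3
  intro t ht
  have := hanti (Set.self_mem_Ici) ht ht
  simp only [hG, mul_zero, Real.exp_zero, one_mul] at this
  have hexp : 0 < Real.exp (c * t) := Real.exp_pos _
  rw [neg_mul, Real.exp_neg]
  rw [inv_mul_eq_div, le_div_iff₀ hexp]
  linarith [this]

end Aux

set_option maxHeartbeats 1000000 in
/-- **total control.** The feedback `u = -α v^⊥` with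
`0 < α ≤ M/(N√V₀)` is admissible, makes `V` decay exponentially
(`V(t) ≤ e^{-2αt} V(0)`), steers the system to consensus and reaches the consensus
region in finite time. -/
theorem totalControl_consensus
    {d N : ℕ} (hN : 0 < N)
    (a : ℝ → ℝ)
    (ha_pos : ∀ r, 0 ≤ r → 0 < a r)
    (ha_mono : ∀ r s, 0 ≤ r → r ≤ s → a s ≤ a r)
    (ha_bdd : ∃ C, ∀ r, 0 ≤ r → a r ≤ C)
    (ha_lip : ∃ K : NNReal, LipschitzWith K a)
    (M : ℝ) (hM : 0 < M)
    (x0 v0 : Fin N → EuclideanSpace ℝ (Fin d))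
    (hV0 : 0 < bform v0 v0)
    (α : ℝ) (hα_pos : 0 < α) (hα_le : α ≤ M / (N * Real.sqrt (bform v0 v0)))
    (x v : ℝ → Fin N → EuclideanSpace ℝ (Fin d))
    (hx0 : x 0 = x0) (hv0 : v 0 = v0)
    -- the total control `u(t) = -α v^⊥(t)`
    (u : ℝ → Fin N → EuclideanSpace ℝ (Fin d))
    (hu : ∀ t, 0 ≤ t → ∀ i, u t i = -α • (v t i - meanVec (v t)))
    (hx : ∀ (i : Fin N), ∀ t, 0 ≤ t → HasDerivAt (fun s => x s i) (v t i) t)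
    (hv : ∀ (i : Fin N), ∀ t, 0 ≤ t → HasDerivAt (fun s => v s i)
      ((N : ℝ)⁻¹ • ∑ j, a ‖x t i - x t j‖ • (v t j - v t i) + u t i) t) :
    -- (1) admissibility
    (∀ t, 0 ≤ t → ∑ i, ‖u t i‖ ≤ M) ∧
    -- (2) exponential decay of V, consensus, and reaching the consensus region
    (∀ t, 0 ≤ t → bform (v t) (v t) ≤ Real.exp (-2 * α * t) * bform (v 0) (v 0)) ∧
    (∀ i, Tendsto (fun t => ‖v t i - meanVec (v t)‖) atTop (nhds 0)) ∧
    (∃ T, 0 ≤ T ∧ ENNReal.ofReal (Real.sqrt (bform (v T) (v T))) ≤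
      ∫⁻ r in Set.Ioi (Real.sqrt (bform (x T) (x T))),
        ENNReal.ofReal (a (Real.sqrt (2 * N) * r))) := by
  have hNR : (0:ℝ) < N := Nat.cast_pos.mpr hN
  -- the decay of V
  have hdecay : ∀ t, 0 ≤ t →
      bform (v t) (v t) ≤ Real.exp (-(2*α) * t) * bform (v 0) (v 0) := by
    apply gronwall_decay
    intro t ht
    set A : Fin N → Fin N → ℝ := fun i j => a ‖x t i - x t j‖ with hA
    set F : Fin N → EuclideanSpace ℝ (Fin d) :=
      fun i => (N : ℝ)⁻¹ • ∑ k, A i k • (v t k - v t i) with hF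
    set w : Fin N → EuclideanSpace ℝ (Fin d) :=
      fun i => F i + u t i with hw
    refine ⟨(2*(N:ℝ)^2)⁻¹ * ∑ i, ∑ j,
      (⟪v t i - v t j, w i - w j⟫_ℝ + ⟪w i - w j, v t i - v t j⟫_ℝ), ?_, ?_⟩
    · show HasDerivAt (fun s => (2*(N:ℝ)^2)⁻¹ * ∑ i, ∑ j, ⟪v s i - v s j, v s i - v s j⟫_ℝ) _ t
      apply HasDerivAt.const_mul
      apply HasDerivAt.fun_sum
      intro i _
      apply HasDerivAt.fun_sum
      intro j _
      exact HasDerivAt.inner ℝ ((hv i t ht).sub (hv j t ht)) ((hv i t ht).sub (hv j t ht))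
    · have hkey : ∀ i j : Fin N,
          ⟪v t i - v t j, w i - w j⟫_ℝ + ⟪w i - w j, v t i - v t j⟫_ℝ
            = 2 * ⟪v t i - v t j, F i - F j⟫_ℝ
              + (2 * (-α)) * ⟪v t i - v t j, v t i - v t j⟫_ℝ := by
        intro i j
        have hdiff : w i - w j = (F i - F j) + (-α) • (v t i - v t j) := by
          rw [hw]
          simp only [hu t ht i, hu t ht j]
          module
        rw [hdiff]
        simp only [inner_add_left, inner_add_right, real_inner_smul_left,
          real_inner_smul_right]
        rw [real_inner_comm (F i - F j) (v t i - v t j)]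
        ring
      have hsum : ∑ i, ∑ j,
          (⟪v t i - v t j, w i - w j⟫_ℝ + ⟪w i - w j, v t i - v t j⟫_ℝ)
          = 2 * (∑ i, ∑ j, ⟪v t i - v t j, F i - F j⟫_ℝ)
            + (2 * (-α)) * ∑ i, ∑ j, ⟪v t i - v t j, v t i - v t j⟫_ℝ := by
        simp only [hkey, Finset.sum_add_distrib, ← Finset.mul_sum]
      rw [hsum]
      have hdis : ∑ i, ∑ j, ⟪v t i - v t j, F i - F j⟫_ℝ ≤ 0 := by
        apply dissip A
        · intro i j
          simp only [hA, norm_sub_rev (x t i)]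
        · intro i j
          exact (ha_pos _ (norm_nonneg _)).le
        
      have hc : (0:ℝ) ≤ (2*(N:ℝ)^2)⁻¹ := by positivity
      have hcs := mul_nonpos_of_nonneg_of_nonpos hc hdis
      rw [bform]
      nlinarith [hcs]
  have hV00 : bform (v 0) (v 0) = bform v0 v0 := by rw [hv0]
  have hexp_sq : ∀ t : ℝ, Real.exp (-(2*α) * t) = (Real.exp (-α * t))^2 := by
    intro t
    rw [sq, ← Real.exp_add]
    ring_nf
  -- sqrt decay
  have hsqrtV : ∀ t, 0 ≤ t → Real.sqrt (bform (v t) (v t))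
      ≤ Real.sqrt (bform v0 v0) * Real.exp (-α * t) := by
    intro t ht
    have h1 := hdecay t ht
    rw [hV00] at h1
    calc Real.sqrt (bform (v t) (v t))
        ≤ Real.sqrt (Real.exp (-(2*α) * t) * bform v0 v0) := Real.sqrt_le_sqrt h1
      _ = Real.sqrt (bform v0 v0) * Real.exp (-α * t) := by
          rw [hexp_sq, Real.sqrt_mul (sq_nonneg _), Real.sqrt_sq (Real.exp_pos _).le,
            mul_comm]
  have hVle : ∀ t, 0 ≤ t → Real.sqrt (bform (v t) (v t)) ≤ Real.sqrt (bform v0 v0) := by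
    intro t ht
    have h1 := hsqrtV t ht
    have h2 : Real.exp (-α * t) ≤ 1 := by
      rw [Real.exp_le_one_iff]
      have : 0 ≤ α * t := mul_nonneg hα_pos.le ht
      linarith
    nlinarith [Real.sqrt_nonneg (bform v0 v0), Real.exp_pos (-α * t)]
  -- Part (1): admissibility
  have part1 : ∀ t, 0 ≤ t → ∑ i, ‖u t i‖ ≤ M := by
    intro t ht
    have h1 : ∑ i, ‖u t i‖ = α * ∑ i, ‖v t i - meanVec (v t)‖ := by
      rw [Finset.mul_sum]
      apply Finset.sum_congr rfl
      intro i _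
      rw [hu t ht i, norm_smul, Real.norm_eq_abs, abs_neg, abs_of_pos hα_pos]
    have h2 := sum_norm_sub_mean_le hN (v t)
    have h3 := hVle t ht
    have h4 : (0:ℝ) < (N:ℝ) * Real.sqrt (bform v0 v0) :=
      mul_pos hNR (Real.sqrt_pos.mpr hV0)
    have h5 : α * ((N:ℝ) * Real.sqrt (bform v0 v0)) ≤ M := by
      rw [div_eq_inv_mul] at hα_le
      calc α * ((N:ℝ) * Real.sqrt (bform v0 v0))
          ≤ (((N:ℝ) * Real.sqrt (bform v0 v0))⁻¹ * M) * ((N:ℝ) * Real.sqrt (bform v0 v0)) := by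
            apply mul_le_mul_of_nonneg_right hα_le h4.le
        _ = M := by field_simp
    calc ∑ i, ‖u t i‖ = α * ∑ i, ‖v t i - meanVec (v t)‖ := h1
      _ ≤ α * ((N:ℝ) * Real.sqrt (bform (v t) (v t))) := by
          apply mul_le_mul_of_nonneg_left h2 hα_pos.le
      _ ≤ α * ((N:ℝ) * Real.sqrt (bform v0 v0)) := by
          apply mul_le_mul_of_nonneg_left _ hα_pos.le
          exact mul_le_mul_of_nonneg_left h3 hNR.le
      _ ≤ M := h5
  -- Part (2)
  have part2 : ∀ t, 0 ≤ t →
      bform (v t) (v t) ≤ Real.exp (-2 * α * t) * bform (v 0) (v 0) := by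
    intro t ht
    have : (-2) * α * t = -(2*α) * t := by ring
    rw [this]
    exact hdecay t ht
  -- Part (3): consensus
  have hexp_tendsto : Tendsto (fun t : ℝ => Real.exp (-α * t)) atTop (nhds 0) := by
    have h1 : Tendsto (fun t : ℝ => α * t) atTop atTop :=
      tendsto_id.const_mul_atTop hα_pos
    have h2 := Real.tendsto_exp_neg_atTop_nhds_zero.comp h1
    apply h2.congr
    intro t
    simp [Function.comp, neg_mul]
  have part3 : ∀ i, Tendsto (fun t => ‖v t i - meanVec (v t)‖) atTop (nhds 0) := by
    intro i
    have hg : Tendsto (fun t : ℝ =>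
        Real.sqrt ((N:ℝ) * bform v0 v0) * Real.exp (-α * t)) atTop (nhds 0) := by
      have := hexp_tendsto.const_mul (Real.sqrt ((N:ℝ) * bform v0 v0))
      simpa using this
    apply tendsto_of_tendsto_of_tendsto_of_le_of_le' tendsto_const_nhds hg
    · filter_upwards with t
      exact norm_nonneg _
    · filter_upwards [eventually_ge_atTop (0:ℝ)] with t ht
      calc ‖v t i - meanVec (v t)‖ ≤ Real.sqrt ((N:ℝ) * bform (v t) (v t)) :=
            norm_sub_mean_le hN (v t) i
        _ ≤ Real.sqrt ((N:ℝ) * (Real.exp (-(2*α) * t) * bform v0 v0)) := by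
            apply Real.sqrt_le_sqrt
            apply mul_le_mul_of_nonneg_left _ hNR.le
            have := hdecay t ht
            rwa [hV00] at this
        _ = Real.sqrt ((N:ℝ) * bform v0 v0) * Real.exp (-α * t) := by
            rw [hexp_sq]
            rw [show (N:ℝ) * ((Real.exp (-α*t))^2 * bform v0 v0)
              = ((N:ℝ) * bform v0 v0) * (Real.exp (-α*t))^2 by ring]
            rw [Real.sqrt_mul (by positivity), Real.sqrt_sq (Real.exp_pos _).le]
  refine ⟨part1, part2, part3, ?_⟩
  -- Part (4): reaching the consensus region in finite time
  set C : ℝ := Real.sqrt 2 * N * Real.sqrt (bform v0 v0) with hCdef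
  have hC0 : 0 ≤ C := by positivity
  have hvpair : ∀ s, 0 ≤ s → ∀ i j : Fin N,
      ‖v s i - v s j‖ ≤ C * Real.exp (-α * s) := by
    intro s hs i j
    calc ‖v s i - v s j‖
        ≤ Real.sqrt 2 * N * Real.sqrt (bform (v s) (v s)) := norm_sub_le_of_bform _ i j
      _ ≤ Real.sqrt 2 * N * (Real.sqrt (bform v0 v0) * Real.exp (-α * s)) := by
          apply mul_le_mul_of_nonneg_left (hsqrtV s hs) (by positivity)
      _ = C * Real.exp (-α * s) := by rw [hCdef]; ring
  -- bound on pairwise distances of positions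
  have hxpair : ∀ T, 0 ≤ T → ∀ i j : Fin N,
      ‖x T i - x T j‖ ≤ ‖x0 i - x0 j‖ + C / α := by
    intro T hT i j
    have hmem : ∀ s ∈ Set.uIcc (0:ℝ) T, 0 ≤ s := by
      rw [Set.uIcc_of_le hT]
      intro s hs; exact hs.1
    have hderiv : ∀ s ∈ Set.uIcc (0:ℝ) T,
        HasDerivAt (fun r => x r i - x r j) (v s i - v s j) s :=
      fun s hs => (hx i s (hmem s hs)).sub (hx j s (hmem s hs))
    have hcont : ContinuousOn (fun s => v s i - v s j) (Set.uIcc (0:ℝ) T) := by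
      intro s hs
      exact (((hv i s (hmem s hs)).continuousAt).sub
        ((hv j s (hmem s hs)).continuousAt)).continuousWithinAt
    have hint : IntervalIntegrable (fun s => v s i - v s j) volume 0 T :=
      hcont.intervalIntegrable
    have hftc := intervalIntegral.integral_eq_sub_of_hasDerivAt hderiv hint
    -- bound the integral of the norm
    have hintexp : IntervalIntegrable (fun s => C * Real.exp (-α * s)) volume 0 T :=
      (Continuous.intervalIntegrable
        (continuous_const.mul (Real.continuous_exp.comp (continuous_const.mul continuous_id))) 0 T)
    have hmono : ∫ s in (0:ℝ)..T, ‖v s i - v s j‖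
        ≤ ∫ s in (0:ℝ)..T, C * Real.exp (-α * s) := by
      apply intervalIntegral.integral_mono_on hT (hcont.norm.intervalIntegrable) hintexp
      intro s hs
      exact hvpair s hs.1 i j
    have hval : ∫ s in (0:ℝ)..T, C * Real.exp (-α * s) ≤ C / α := by
      have hprim : ∀ s ∈ Set.uIcc (0:ℝ) T,
          HasDerivAt (fun r => -(C/α) * Real.exp (-α * r)) (C * Real.exp (-α * s)) s := by
        intro s _
        have h1 : HasDerivAt (fun r => Real.exp (-α * r)) (Real.exp (-α * s) * (-α)) s := by
          simpa using ((hasDerivAt_id s).const_mul (-α)).exp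
        have := h1.const_mul (-(C/α))
        exact this.congr_deriv (by field_simp)
      have := intervalIntegral.integral_eq_sub_of_hasDerivAt hprim hintexp
      rw [this]
      have h2 : 0 < Real.exp (-α * T) := Real.exp_pos _
      have h3 : Real.exp (-α * 0) = 1 := by norm_num
      rw [h3]
      have h4 : 0 ≤ C / α := div_nonneg hC0 hα_pos.le
      nlinarith
    have hxeq : x T i - x T j = (x0 i - x0 j) + ∫ s in (0:ℝ)..T, (v s i - v s j) := by
      rw [hftc, hx0]
      abel
    rw [hxeq]
    calc ‖(x0 i - x0 j) + ∫ s in (0:ℝ)..T, (v s i - v s j)‖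
        ≤ ‖x0 i - x0 j‖ + ‖∫ s in (0:ℝ)..T, (v s i - v s j)‖ := norm_add_le _ _
      _ ≤ ‖x0 i - x0 j‖ + C / α := by
          apply add_le_add_right
          calc ‖∫ s in (0:ℝ)..T, (v s i - v s j)‖
              ≤ ∫ s in (0:ℝ)..T, ‖v s i - v s j‖ :=
                intervalIntegral.norm_integral_le_integral_norm hT
            _ ≤ C / α := hmono.trans hval
  set R : ℝ := Real.sqrt 2 * N * Real.sqrt (bform x0 x0) + C / α with hRdef
  have hR0 : 0 ≤ R := by positivity
  have hxpairR : ∀ T, 0 ≤ T → ∀ i j : Fin N, ‖x T i - x T j‖ ≤ R := by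
    intro T hT i j
    have h1 := hxpair T hT i j
    have h2 : ‖x0 i - x0 j‖ ≤ Real.sqrt 2 * N * Real.sqrt (bform x0 x0) :=
      norm_sub_le_of_bform x0 i j
    rw [hRdef]; linarith
  have hXbound : ∀ T, 0 ≤ T → Real.sqrt (bform (x T) (x T)) ≤ R := by
    intro T hT
    have h1 : bform (x T) (x T) ≤ R^2 := by
      rw [bform]
      have hsum : ∑ i, ∑ j, ⟪x T i - x T j, x T i - x T j⟫_ℝ ≤ (N:ℝ)^2 * R^2 := by
        calc ∑ i, ∑ j, ⟪x T i - x T j, x T i - x T j⟫_ℝ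
            ≤ ∑ i : Fin N, ∑ j : Fin N, R^2 := by
              apply Finset.sum_le_sum; intro i _
              apply Finset.sum_le_sum; intro j _
              rw [real_inner_self_eq_norm_sq]
              have := hxpairR T hT i j
              nlinarith [norm_nonneg (x T i - x T j)]
          _ = (N:ℝ)^2 * R^2 := by
              simp [Finset.sum_const, Finset.card_univ, mul_comm]
              ring
      have hc : (0:ℝ) < (N:ℝ)^2 := by positivity
      calc (2 * (N:ℝ)^2)⁻¹ * ∑ i, ∑ j, ⟪x T i - x T j, x T i - x T j⟫_ℝ
          ≤ (2 * (N:ℝ)^2)⁻¹ * ((N:ℝ)^2 * R^2) := by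
            apply mul_le_mul_of_nonneg_left hsum (by positivity)
        _ ≤ R^2 := by
            have hNe : ((N:ℝ)^2) ≠ 0 := by positivity
            have heq : (2 * (N:ℝ)^2)⁻¹ * ((N:ℝ)^2 * R^2) = R^2/2 := by
              field_simp
            rw [heq]
            nlinarith [sq_nonneg R]
    calc Real.sqrt (bform (x T) (x T)) ≤ Real.sqrt (R^2) := Real.sqrt_le_sqrt h1
      _ = R := Real.sqrt_sq hR0
  -- positive lower bound for the interaction strength on the relevant region
  set c : ℝ := a (Real.sqrt (2*N) * (R+1)) with hcdef
  have hcpos : 0 < c :=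
    ha_pos _ (mul_nonneg (Real.sqrt_nonneg _) (by linarith))
  -- choose a time where sqrt V is below c
  have hev : ∀ᶠ T in atTop, Real.sqrt (bform v0 v0) * Real.exp (-α * T) < c := by
    have h1 : Tendsto (fun T : ℝ => Real.sqrt (bform v0 v0) * Real.exp (-α * T))
        atTop (nhds 0) := by
      have := hexp_tendsto.const_mul (Real.sqrt (bform v0 v0))
      simpa using this
    exact h1.eventually_lt_const hcpos
  obtain ⟨T, hTc, hT0⟩ := (hev.and (eventually_ge_atTop (0:ℝ))).exists
  refine ⟨T, hT0, ?_⟩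
  have hVc : Real.sqrt (bform (v T) (v T)) ≤ c := (hsqrtV T hT0).trans hTc.le
  set s₀ : ℝ := Real.sqrt (bform (x T) (x T)) with hs₀
  have hs0 : 0 ≤ s₀ := Real.sqrt_nonneg _
  have hsR : s₀ ≤ R := hXbound T hT0
  have hmeas : Measurable fun r : ℝ => ENNReal.ofReal (a (Real.sqrt (2*N) * r)) := by
    obtain ⟨K, hK⟩ := ha_lip
    exact ENNReal.measurable_ofReal.comp
      ((hK.continuous.comp (continuous_const.mul continuous_id)).measurable)
  calc ENNReal.ofReal (Real.sqrt (bform (v T) (v T)))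
      ≤ ENNReal.ofReal c := ENNReal.ofReal_le_ofReal hVc
    _ ≤ ENNReal.ofReal c * volume (Set.Ioc s₀ (R+1)) := by
        rw [Real.volume_Ioc]
        nth_rewrite 1 [← mul_one (ENNReal.ofReal c)]
        apply mul_le_mul_right
        rw [← ENNReal.ofReal_one]
        apply ENNReal.ofReal_le_ofReal
        linarith
    _ = ∫⁻ r in Set.Ioc s₀ (R+1), ENNReal.ofReal c := by
        rw [setLIntegral_const, mul_comm]
    _ ≤ ∫⁻ r in Set.Ioc s₀ (R+1), ENNReal.ofReal (a (Real.sqrt (2*N) * r)) := by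
        apply setLIntegral_mono hmeas
        intro r hr
        apply ENNReal.ofReal_le_ofReal
        rw [hcdef]
        apply ha_mono
        · exact mul_nonneg (Real.sqrt_nonneg _) (hs0.trans hr.1.le)
        · apply mul_le_mul_of_nonneg_left _ (Real.sqrt_nonneg _)
          exact hr.2
    _ ≤ ∫⁻ r in Set.Ioi s₀, ENNReal.ofReal (a (Real.sqrt (2*N) * r)) :=
        lintegral_mono_set Set.Ioc_subset_Ioi_self
end
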